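/- Consider m clients with local objectives f_i and global objective f = (1/m)∑f_i, where each f_i is L-smooth and convex. Fix a point x̄ and η with 0 < η ≤ 1/L. Define iterates x_{i,0} = x̄ and x_{i,ℓ+1} = x_{i,ℓ} - η(∇f_i(x_{i,ℓ}) - ∇f_i(x̄) + ∇f(x̄)) for ℓ = 0,…,H-1. Then for every client i and every ℓ ∈ {0,…,H-1}, ‖x_{i,ℓ} - x̄‖ ≤ η·H·‖∇f(x̄)‖. -/

import Mathlib

open Set InnerProductSpace

local notation "⟪" x ", " y "⟫" => @inner ℝ _ _ x y

variable {F' : Type*} [NormedAddCommGroup F'] [InnerProductSpace ℝ F'] [CompleteSpace F']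

lemma aux_hasDerivAt_line (f : F' → ℝ) (hf : Differentiable ℝ f) (x v : F') (t : ℝ) :
    HasDerivAt (fun s : ℝ => f (x + s • v)) ⟪gradient f (x + t • v), v⟫ t := by
  have hline : HasDerivAt (fun s : ℝ => x + s • v) v t := by
    simpa using ((hasDerivAt_id t).smul_const v).const_add x
  have hg : HasFDerivAt f (toDual ℝ F' (gradient f (x + t • v))) (x + t • v) :=
    hasGradientAt_iff_hasFDerivAt.mp (hf _).hasGradientAt
  have h := hg.comp_hasDerivAt t hline
  simpa [Function.comp_def] using h

lemma aux_grad_lower (f : F' → ℝ) (hconv : ConvexOn ℝ univ f) (hf : Differentiable ℝ f)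
    (x y : F') : f x + ⟪gradient f x, y - x⟫ ≤ f y := by
  have hg : ConvexOn ℝ univ (fun t : ℝ => f (x + t • (y - x))) := by
    have h1 := hconv.comp_affineMap (AffineMap.lineMap x y : ℝ →ᵃ[ℝ] F')
    simp only [preimage_univ] at h1
    have heq : (fun t : ℝ => f (x + t • (y - x))) = f ∘ AffineMap.lineMap x y := by
      funext t
      simp [Function.comp, AffineMap.lineMap_apply, add_comm]
    rw [heq]; exact h1
  have hd := aux_hasDerivAt_line f hf x (y - x) 0
  have h2 := hg.le_slope_of_hasDerivAt (mem_univ (0:ℝ)) (mem_univ 1) one_pos hd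
  rw [slope_def_field] at h2
  simp only [zero_smul, add_zero, one_smul, add_sub_cancel, sub_zero, div_one] at h2
  linarith

lemma aux_grad_descent (f : F' → ℝ) (hf : Differentiable ℝ f) {L : ℝ} (hL : 0 < L)
    (hlip : LipschitzWith L.toNNReal (gradient f)) (x y : F') :
    f y ≤ f x + ⟪gradient f x, y - x⟫ + L / 2 * ‖y - x‖ ^ 2 := by
  set v := y - x with hv
  set φ : ℝ → ℝ := fun t => f (x + t • v) - t * ⟪gradient f x, v⟫ - L * t ^ 2 / 2 * ‖v‖ ^ 2 with hφ
  have hder : ∀ t : ℝ,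
      HasDerivAt φ (⟪gradient f (x + t • v), v⟫ - ⟪gradient f x, v⟫ - L * t * ‖v‖ ^ 2) t := by
    intro t
    have h1 := aux_hasDerivAt_line f hf x v t
    have h2 : HasDerivAt (fun t : ℝ => t * ⟪gradient f x, v⟫) ⟪gradient f x, v⟫ t := by
      simpa using (hasDerivAt_id t).mul_const ⟪gradient f x, v⟫
    have h3 : HasDerivAt (fun t : ℝ => L * t ^ 2 / 2 * ‖v‖ ^ 2) (L * t * ‖v‖ ^ 2) t := by
      have h4 : HasDerivAt (fun t : ℝ => L * t ^ 2 / 2 * ‖v‖ ^ 2)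
          (L * (2 * t ^ 1) / 2 * ‖v‖ ^ 2) t :=
        (((hasDerivAt_pow 2 t).const_mul L).div_const 2).mul_const (‖v‖ ^ 2)
      convert h4 using 1; ring
    exact (h1.sub h2).sub h3
  have hmono : AntitoneOn φ (Ici (0:ℝ)) := by
    apply antitoneOn_of_hasDerivWithinAt_nonpos (convex_Ici 0)
      (fun t _ => (hder t).continuousAt.continuousWithinAt)
      (fun t _ => (hder t).hasDerivWithinAt)
    intro t ht
    rw [interior_Ici] at ht
    have htpos : (0:ℝ) < t := ht
    have hlip' : ‖gradient f (x + t • v) - gradient f x‖ ≤ L * (t * ‖v‖) := by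
      have h := hlip.dist_le_mul (x + t • v) x
      rw [dist_eq_norm, dist_eq_norm] at h
      have he : ‖x + t • v - x‖ = t * ‖v‖ := by
        simp [norm_smul, abs_of_pos htpos]
      rw [he] at h
      simpa [Real.coe_toNNReal L hL.le] using h
    have h0 : ⟪gradient f (x + t • v), v⟫ - ⟪gradient f x, v⟫
        = ⟪gradient f (x + t • v) - gradient f x, v⟫ := by rw [inner_sub_left]
    have hcs := real_inner_le_norm (gradient f (x + t • v) - gradient f x) v
    have hnv := norm_nonneg v
    have := mul_le_mul_of_nonneg_right hlip' hnv
    rw [h0]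
    nlinarith [hcs]
  have hle := hmono (self_mem_Ici) (by norm_num : (1:ℝ) ∈ Ici (0:ℝ)) zero_le_one
  have h0' : φ 0 = f x := by simp [hφ]
  have h1' : φ 1 = f y - ⟪gradient f x, v⟫ - L / 2 * ‖v‖ ^ 2 := by
    have hxy : x + (1:ℝ) • v = y := by rw [hv]; rw [one_smul]; abel
    simp only [hφ, hxy, one_pow, one_mul, mul_one]
  rw [h0', h1'] at hle
  linarith

lemma aux_grad_cocoercive (f : F' → ℝ) (hconv : ConvexOn ℝ univ f) (hf : Differentiable ℝ f)
    {L : ℝ} (hL : 0 < L) (hlip : LipschitzWith L.toNNReal (gradient f)) (x y : F') :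
    (1 / L) * ‖gradient f y - gradient f x‖ ^ 2 ≤ ⟪gradient f y - gradient f x, y - x⟫ := by
  have key : ∀ a b : F', f a + ⟪gradient f a, b - a⟫
      + 1 / (2 * L) * ‖gradient f b - gradient f a‖ ^ 2 ≤ f b := by
    intro a b
    set g := gradient f b - gradient f a with hg
    set z := b - (1 / L) • g with hzdef
    have h1 := aux_grad_lower f hconv hf a z
    have h2 := aux_grad_descent f hf hL hlip b z
    have hzb : z - b = -((1 / L) • g) := by rw [hzdef]; abel
    have e1 : ⟪gradient f a, z - a⟫
        = ⟪gradient f a, b - a⟫ - (1 / L) * ⟪gradient f a, g⟫ := by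
      have hza : z - a = (b - a) - (1 / L) • g := by rw [hzdef]; abel
      rw [hza, inner_sub_right, real_inner_smul_right]
    have e2 : ⟪gradient f b, z - b⟫ = -((1 / L) * ⟪gradient f b, g⟫) := by
      rw [hzb, inner_neg_right, real_inner_smul_right]
    have e3 : ‖z - b‖ ^ 2 = (1 / L) ^ 2 * ‖g‖ ^ 2 := by
      rw [hzb, norm_neg, norm_smul, mul_pow]
      congr 1
      rw [Real.norm_eq_abs, sq_abs]
    have e4 : ⟪gradient f b, g⟫ - ⟪gradient f a, g⟫ = ‖g‖ ^ 2 := by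
      rw [← inner_sub_left, ← hg, real_inner_self_eq_norm_sq]
    rw [e1] at h1
    rw [e2, e3] at h2
    have harith : L / 2 * ((1 / L) ^ 2 * ‖g‖ ^ 2) = 1 / (2 * L) * ‖g‖ ^ 2 := by
      field_simp
    have h5 : (1 / L) * ⟪gradient f b, g⟫ - (1 / L) * ⟪gradient f a, g⟫
        = (1 / L) * ‖g‖ ^ 2 := by rw [← mul_sub, e4]
    have hc : (1 / L) * ‖g‖ ^ 2 - 1 / (2 * L) * ‖g‖ ^ 2 = 1 / (2 * L) * ‖g‖ ^ 2 := by
      field_simp; ring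
    linarith
  have k1 := key x y
  have k2 := key y x
  have e5 : ⟪gradient f y, x - y⟫ = -⟪gradient f y, y - x⟫ := by
    rw [show x - y = -(y - x) by abel, inner_neg_right]
  have e6 : ‖gradient f x - gradient f y‖ = ‖gradient f y - gradient f x‖ := norm_sub_rev _ _
  have e7 : ⟪gradient f y - gradient f x, y - x⟫
      = ⟪gradient f y, y - x⟫ - ⟪gradient f x, y - x⟫ := inner_sub_left _ _ _
  rw [e5, e6] at k2
  have hc2 : 1 / (2 * L) * ‖gradient f y - gradient f x‖ ^ 2
      + 1 / (2 * L) * ‖gradient f y - gradient f x‖ ^ 2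
      = (1 / L) * ‖gradient f y - gradient f x‖ ^ 2 := by field_simp; ring
  linarith

lemma aux_contraction (f : F' → ℝ) (hconv : ConvexOn ℝ univ f) (hf : Differentiable ℝ f)
    {L η : ℝ} (hL : 0 < L) (hlip : LipschitzWith L.toNNReal (gradient f))
    (hη : 0 < η) (hη' : η ≤ 1 / L) (x y : F') :
    ‖y - x - η • (gradient f y - gradient f x)‖ ≤ ‖y - x‖ := by
  set g := gradient f y - gradient f x with hg
  have hco := aux_grad_cocoercive f hconv hf hL hlip x y
  rw [← hg] at hco
  have hsq : ‖y - x - η • g‖ ^ 2 ≤ ‖y - x‖ ^ 2 := by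
    rw [norm_sub_sq_real, real_inner_smul_right, norm_smul, mul_pow, Real.norm_eq_abs, sq_abs,
      real_inner_comm]
    have h1 : η * ((1 / L) * ‖g‖ ^ 2) ≤ η * ⟪g, y - x⟫ :=
      mul_le_mul_of_nonneg_left hco hη.le
    have h2 : η * ‖g‖ ^ 2 ≤ (1 / L) * ‖g‖ ^ 2 :=
      mul_le_mul_of_nonneg_right hη' (sq_nonneg _)
    nlinarith [sq_nonneg ‖g‖, hη]
  nlinarith [norm_nonneg (y - x - η • g), norm_nonneg (y - x)]

/-- Drift bound for FedLin local iterates with convex smooth clients: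
`‖x_{i,ℓ} - x̄‖ ≤ η H ‖∇f(x̄)‖` for all `ℓ ∈ {0,…,H-1}`. -/
theorem fedlin_drift_bound_convex {d m H : ℕ} (hm : 0 < m)
    (f : Fin m → EuclideanSpace ℝ (Fin d) → ℝ)
    (F : EuclideanSpace ℝ (Fin d) → ℝ)
    (hF : ∀ z, F z = (1 / (m : ℝ)) * ∑ i, f i z)
    (L η : ℝ) (hL : 0 < L)
    (hdiff : ∀ i, Differentiable ℝ (f i))
    (hsmooth : ∀ i, LipschitzWith L.toNNReal (gradient (f i)))
    (hconv : ∀ i, ConvexOn ℝ Set.univ (f i))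
    (hη : 0 < η) (hη' : η ≤ 1 / L)
    (xbar : EuclideanSpace ℝ (Fin d))
    (x : Fin m → ℕ → EuclideanSpace ℝ (Fin d))
    (hx0 : ∀ i, x i 0 = xbar)
    (hrec : ∀ i, ∀ ℓ < H, x i (ℓ + 1) =
      x i ℓ - η • (gradient (f i) (x i ℓ) - gradient (f i) xbar + gradient F xbar)) :
    ∀ i, ∀ ℓ < H, ‖x i ℓ - xbar‖ ≤ η * H * ‖gradient F xbar‖ := by
  intro i
  have claim : ∀ ℓ, ℓ ≤ H → ‖x i ℓ - xbar‖ ≤ η * ℓ * ‖gradient F xbar‖ := by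
    intro ℓ
    induction ℓ with
    | zero => intro _; simp [hx0 i]
    | succ ℓ ih =>
      intro hℓH
      have hℓ : ℓ < H := hℓH
      have hIH := ih (Nat.le_of_lt hℓ)
      have hsplit : x i (ℓ + 1) - xbar
          = (x i ℓ - xbar - η • (gradient (f i) (x i ℓ) - gradient (f i) xbar))
            + -(η • gradient F xbar) := by
        rw [hrec i ℓ hℓ, smul_add]
        abel
      have hcontr := aux_contraction (f i) (hconv i) (hdiff i) hL (hsmooth i) hη hη'
        xbar (x i ℓ)
      calc ‖x i (ℓ + 1) - xbar‖
          ≤ ‖x i ℓ - xbar - η • (gradient (f i) (x i ℓ) - gradient (f i) xbar)‖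
            + ‖-(η • gradient F xbar)‖ := by rw [hsplit]; exact norm_add_le _ _
        _ ≤ ‖x i ℓ - xbar‖ + η * ‖gradient F xbar‖ := by
            rw [norm_neg, norm_smul, Real.norm_eq_abs, abs_of_pos hη]
            exact add_le_add_left hcontr _
        _ ≤ η * ℓ * ‖gradient F xbar‖ + η * ‖gradient F xbar‖ := add_le_add_left hIH _
        _ = η * (ℓ + 1 : ℕ) * ‖gradient F xbar‖ := by push_cast; ring
  intro ℓ hℓ
  calc ‖x i ℓ - xbar‖ ≤ η * ℓ * ‖gradient F xbar‖ := claim ℓ (Nat.le_of_lt hℓ)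
    _ ≤ η * H * ‖gradient F xbar‖ := by
        apply mul_le_mul_of_nonneg_right _ (norm_nonneg _)
        apply mul_le_mul_of_nonneg_left _ hη.le
        exact_mod_cast Nat.le_of_lt hℓ
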